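/- For any four points x,y,z,w in a metric space (X,d), the four point condition is bounded by half the sum of the three point conditions over the four triples: fp(d;x,y,z,w) ≤ (1/2)[tp(d;x,y,z) + tp(d;x,y,w) + tp(d;x,z,w) + tp(d;y,z,w)]. -/
import Mathlib


noncomputable section

variable {Xt : Type*}

/-- Gromov product of `x,y` with base `w`. -/
def gp (d : Xt → Xt → ℝ) (w x y : Xt) : ℝ := (d x w + d y w - d x y) / 2

/-- One term of the four point condition. -/
def fpt (d : Xt → Xt → ℝ) (w x y z : Xt) : ℝ :=
  min (gp d w x z) (gp d w y z) - gp d w x y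

/-- Four point condition with base `w`: max over all permutations of the triple `x,y,z`. -/
def fp (d : Xt → Xt → ℝ) (w x y z : Xt) : ℝ :=
  max (max (max (fpt d w x y z) (fpt d w x z y)) (max (fpt d w y x z) (fpt d w y z x)))
      (max (fpt d w z x y) (fpt d w z y x))

/-- One term of the three point condition. -/
def tpt (d : Xt → Xt → ℝ) (x y z : Xt) : ℝ := d x z - max (d x y) (d y z)

/-- Three point condition: max over all permutations of `x,y,z`. -/
def tp (d : Xt → Xt → ℝ) (x y z : Xt) : ℝ :=
  max (max (max (tpt d x y z) (tpt d x z y)) (max (tpt d y x z) (tpt d y z x)))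
      (max (tpt d z x y) (tpt d z y x))

lemma tpt_le_tp₁ (d : Xt → Xt → ℝ) (x y z : Xt) : tpt d x y z ≤ tp d x y z :=
  le_max_of_le_left (le_max_of_le_left (le_max_left _ _))

lemma tpt_le_tp₂ (d : Xt → Xt → ℝ) (x y z : Xt) : tpt d x z y ≤ tp d x y z :=
  le_max_of_le_left (le_max_of_le_left (le_max_right _ _))

lemma tpt_le_tp₃ (d : Xt → Xt → ℝ) (x y z : Xt) : tpt d y x z ≤ tp d x y z :=
  le_max_of_le_left (le_max_of_le_right (le_max_left _ _))

lemma tpt_le_tp₄ (d : Xt → Xt → ℝ) (x y z : Xt) : tpt d y z x ≤ tp d x y z :=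
  le_max_of_le_left (le_max_of_le_right (le_max_right _ _))

lemma tpt_le_tp₅ (d : Xt → Xt → ℝ) (x y z : Xt) : tpt d z x y ≤ tp d x y z :=
  le_max_of_le_right (le_max_left _ _)

lemma tpt_le_tp₆ (d : Xt → Xt → ℝ) (x y z : Xt) : tpt d z y x ≤ tp d x y z :=
  le_max_of_le_right (le_max_right _ _)

lemma tp_perm_le₁₂ (d : Xt → Xt → ℝ) (x y z : Xt) : tp d x y z ≤ tp d y x z :=
  max_le (max_le (max_le (tpt_le_tp₃ d y x z) (tpt_le_tp₄ d y x z))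
      (max_le (tpt_le_tp₁ d y x z) (tpt_le_tp₂ d y x z)))
    (max_le (tpt_le_tp₆ d y x z) (tpt_le_tp₅ d y x z))

lemma tp_perm_le₂₃ (d : Xt → Xt → ℝ) (x y z : Xt) : tp d x y z ≤ tp d x z y :=
  max_le (max_le (max_le (tpt_le_tp₂ d x z y) (tpt_le_tp₁ d x z y))
      (max_le (tpt_le_tp₅ d x z y) (tpt_le_tp₆ d x z y)))
    (max_le (tpt_le_tp₃ d x z y) (tpt_le_tp₄ d x z y))

lemma tp_comm₁₂ (d : Xt → Xt → ℝ) (x y z : Xt) : tp d x y z = tp d y x z :=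
  le_antisymm (tp_perm_le₁₂ d x y z) (tp_perm_le₁₂ d y x z)

lemma tp_comm₂₃ (d : Xt → Xt → ℝ) (x y z : Xt) : tp d x y z = tp d x z y :=
  le_antisymm (tp_perm_le₂₃ d x y z) (tp_perm_le₂₃ d x z y)

lemma tp_nonneg {X : Type*} [MetricSpace X] (x y z : X) :
    0 ≤ tp (fun a b => dist a b) x y z := by
  rcases le_total (dist x y) (dist y z) with h | h
  · rcases le_total (dist y z) (dist x z) with h2 | h2
    · refine le_trans ?_ (tpt_le_tp₁ (fun a b => dist a b) x y z)
      simp only [tpt, sub_nonneg]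
      exact max_le (h.trans h2) h2
    · refine le_trans ?_ (tpt_le_tp₃ (fun a b => dist a b) x y z)
      simp only [tpt, sub_nonneg]
      exact max_le (by rw [dist_comm]; exact h) h2
  · rcases le_total (dist x y) (dist x z) with h2 | h2
    · refine le_trans ?_ (tpt_le_tp₁ (fun a b => dist a b) x y z)
      simp only [tpt, sub_nonneg]
      exact max_le h2 (h.trans h2)
    · refine le_trans ?_ (tpt_le_tp₂ (fun a b => dist a b) x y z)
      simp only [tpt, sub_nonneg]
      exact max_le h2 (by rw [dist_comm]; exact h)

lemma core {X : Type*} [MetricSpace X] (x y z w : X)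
    (h : dist x w + dist y z ≤ dist x z + dist y w) :
    dist x y + dist z w - (dist x z + dist y w) ≤
      tp (fun a b : X => dist a b) x y z + tp (fun a b : X => dist a b) x y w +
      tp (fun a b : X => dist a b) x z w + tp (fun a b : X => dist a b) y z w := by
  have n1 := tp_nonneg x y z
  have n2 := tp_nonneg x y w
  have n3 := tp_nonneg x z w
  have n4 := tp_nonneg y z w
  have F1 : dist x y - max (dist x z) (dist z y) ≤ tp (fun a b : X => dist a b) x y z :=
    tpt_le_tp₂ _ x y z
  have F2 : dist x y - max (dist x w) (dist w y) ≤ tp (fun a b : X => dist a b) x y w :=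
    tpt_le_tp₂ _ x y w
  have F3 : dist z w - max (dist z x) (dist x w) ≤ tp (fun a b : X => dist a b) x z w :=
    tpt_le_tp₃ _ x z w
  have F4 : dist z w - max (dist z y) (dist y w) ≤ tp (fun a b : X => dist a b) y z w :=
    tpt_le_tp₃ _ y z w
  rcases le_total (dist y z) (dist x z) with h1 | h1
  · rcases le_total (dist y z) (dist y w) with h2 | h2
    · have m1 : max (dist x z) (dist z y) ≤ dist x z :=
        max_le le_rfl (by rw [dist_comm]; exact h1)
      have m4 : max (dist z y) (dist y w) ≤ dist y w :=
        max_le (by rw [dist_comm]; exact h2) le_rfl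
      linarith
    · have m4 : max (dist z y) (dist y w) ≤ dist z y :=
        max_le le_rfl (by rw [dist_comm z y]; exact h2)
      have hzy : dist z y = dist y z := dist_comm z y
      rcases le_total (dist x w) (dist y w) with h3 | h3
      · have m2 : max (dist x w) (dist w y) ≤ dist y w :=
          max_le h3 (dist_comm w y).le
        linarith
      · have m2 : max (dist x w) (dist w y) ≤ dist x w :=
          max_le le_rfl (by rw [dist_comm w y]; exact h3)
        linarith
  · rcases le_total (dist x w) (dist x z) with h3 | h3
    · have hcf : dist x w ≤ dist y w := by linarith
      have m2 : max (dist x w) (dist w y) ≤ dist y w := max_le hcf (dist_comm w y).le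
      have m3 : max (dist z x) (dist x w) ≤ dist x z := max_le (dist_comm z x).le h3
      linarith
    · have m1 : max (dist x z) (dist z y) ≤ dist y z := max_le h1 (dist_comm z y).le
      have m3 : max (dist z x) (dist x w) ≤ dist x w :=
        max_le (le_trans (dist_comm z x).le h3) le_rfl
      linarith

/-- The four point condition is bounded by half the sum of the three point conditions
over the four triples. -/
theorem fp_le_half_sum_tp {X : Type*} [MetricSpace X] (x y z w : X) :
    fp (fun a b => dist a b) w x y z ≤
      (1 / 2) * (tp (fun a b => dist a b) x y z + tp (fun a b => dist a b) x y w +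
        tp (fun a b => dist a b) x z w + tp (fun a b => dist a b) y z w) := by
  simp only [fp, fpt, gp]
  refine max_le (max_le (max_le ?_ ?_) (max_le ?_ ?_)) (max_le ?_ ?_)
  · -- fpt w x y z
    rcases le_total (dist x w + dist y z) (dist x z + dist y w) with hc | hc
    · refine le_trans (sub_le_sub_right (min_le_left _ _) _) ?_
      have HC := core x y z w hc
      linarith [HC]
    · refine le_trans (sub_le_sub_right (min_le_right _ _) _) ?_
      have HC := core x y w z hc
      have E2 : tp (fun a b : X => dist a b) x w z = tp (fun a b : X => dist a b) x z w := tp_comm₂₃ (fun a b : X => dist a b) x w z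
      have E3 : tp (fun a b : X => dist a b) y w z = tp (fun a b : X => dist a b) y z w := tp_comm₂₃ (fun a b : X => dist a b) y w z
      linarith [HC, dist_comm w z, E2, E3]
  · -- fpt w x z y
    rcases le_total (dist x w + dist z y) (dist x y + dist z w) with hc | hc
    · refine le_trans (sub_le_sub_right (min_le_left _ _) _) ?_
      have HC := core x z y w hc
      have E0 : tp (fun a b : X => dist a b) x z y = tp (fun a b : X => dist a b) x y z := tp_comm₂₃ (fun a b : X => dist a b) x z y
      have E3 : tp (fun a b : X => dist a b) z y w = tp (fun a b : X => dist a b) y z w := tp_comm₁₂ (fun a b : X => dist a b) z y w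
      linarith [HC, E0, E3]
    · refine le_trans (sub_le_sub_right (min_le_right _ _) _) ?_
      have HC := core x z w y hc
      have E1 : tp (fun a b : X => dist a b) x z y = tp (fun a b : X => dist a b) x y z := tp_comm₂₃ (fun a b : X => dist a b) x z y
      have E2 : tp (fun a b : X => dist a b) x w y = tp (fun a b : X => dist a b) x y w := tp_comm₂₃ (fun a b : X => dist a b) x w y
      have E3 : tp (fun a b : X => dist a b) z w y = tp (fun a b : X => dist a b) y z w := (tp_comm₂₃ (fun a b : X => dist a b) z w y).trans (tp_comm₁₂ (fun a b : X => dist a b) z y w)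
      linarith [HC, dist_comm w y, E1, E2, E3]
  · -- fpt w y x z
    rcases le_total (dist y w + dist x z) (dist y z + dist x w) with hc | hc
    · refine le_trans (sub_le_sub_right (min_le_left _ _) _) ?_
      have HC := core y x z w hc
      have E0 : tp (fun a b : X => dist a b) y x z = tp (fun a b : X => dist a b) x y z := tp_comm₁₂ (fun a b : X => dist a b) y x z
      have E1 : tp (fun a b : X => dist a b) y x w = tp (fun a b : X => dist a b) x y w := tp_comm₁₂ (fun a b : X => dist a b) y x w
      linarith [HC, E0, E1]
    · refine le_trans (sub_le_sub_right (min_le_right _ _) _) ?_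
      have HC := core y x w z hc
      have E0 : tp (fun a b : X => dist a b) y x w = tp (fun a b : X => dist a b) x y w := tp_comm₁₂ (fun a b : X => dist a b) y x w
      have E1 : tp (fun a b : X => dist a b) y x z = tp (fun a b : X => dist a b) x y z := tp_comm₁₂ (fun a b : X => dist a b) y x z
      have E2 : tp (fun a b : X => dist a b) y w z = tp (fun a b : X => dist a b) y z w := tp_comm₂₃ (fun a b : X => dist a b) y w z
      have E3 : tp (fun a b : X => dist a b) x w z = tp (fun a b : X => dist a b) x z w := tp_comm₂₃ (fun a b : X => dist a b) x w z
      linarith [HC, dist_comm w z, E0, E1, E2, E3]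
  · -- fpt w y z x
    rcases le_total (dist y w + dist z x) (dist y x + dist z w) with hc | hc
    · refine le_trans (sub_le_sub_right (min_le_left _ _) _) ?_
      have HC := core y z x w hc
      have E0 : tp (fun a b : X => dist a b) y z x = tp (fun a b : X => dist a b) x y z := (tp_comm₂₃ (fun a b : X => dist a b) y z x).trans (tp_comm₁₂ (fun a b : X => dist a b) y x z)
      have E2 : tp (fun a b : X => dist a b) y x w = tp (fun a b : X => dist a b) x y w := tp_comm₁₂ (fun a b : X => dist a b) y x w
      have E3 : tp (fun a b : X => dist a b) z x w = tp (fun a b : X => dist a b) x z w := tp_comm₁₂ (fun a b : X => dist a b) z x w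
      linarith [HC, E0, E2, E3]
    · refine le_trans (sub_le_sub_right (min_le_right _ _) _) ?_
      have HC := core y z w x hc
      have E1 : tp (fun a b : X => dist a b) y z x = tp (fun a b : X => dist a b) x y z := (tp_comm₂₃ (fun a b : X => dist a b) y z x).trans (tp_comm₁₂ (fun a b : X => dist a b) y x z)
      have E2 : tp (fun a b : X => dist a b) y w x = tp (fun a b : X => dist a b) x y w := (tp_comm₂₃ (fun a b : X => dist a b) y w x).trans (tp_comm₁₂ (fun a b : X => dist a b) y x w)
      have E3 : tp (fun a b : X => dist a b) z w x = tp (fun a b : X => dist a b) x z w := (tp_comm₂₃ (fun a b : X => dist a b) z w x).trans (tp_comm₁₂ (fun a b : X => dist a b) z x w)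
      linarith [HC, dist_comm w x, E1, E2, E3]
  · -- fpt w z x y
    rcases le_total (dist z w + dist x y) (dist z y + dist x w) with hc | hc
    · refine le_trans (sub_le_sub_right (min_le_left _ _) _) ?_
      have HC := core z x y w hc
      have E0 : tp (fun a b : X => dist a b) z x y = tp (fun a b : X => dist a b) x y z := (tp_comm₁₂ (fun a b : X => dist a b) z x y).trans (tp_comm₂₃ (fun a b : X => dist a b) x z y)
      have E1 : tp (fun a b : X => dist a b) z x w = tp (fun a b : X => dist a b) x z w := tp_comm₁₂ (fun a b : X => dist a b) z x w
      have E2 : tp (fun a b : X => dist a b) z y w = tp (fun a b : X => dist a b) y z w := tp_comm₁₂ (fun a b : X => dist a b) z y w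
      linarith [HC, E0, E1, E2]
    · refine le_trans (sub_le_sub_right (min_le_right _ _) _) ?_
      have HC := core z x w y hc
      have E0 : tp (fun a b : X => dist a b) z x w = tp (fun a b : X => dist a b) x z w := tp_comm₁₂ (fun a b : X => dist a b) z x w
      have E1 : tp (fun a b : X => dist a b) z x y = tp (fun a b : X => dist a b) x y z := (tp_comm₁₂ (fun a b : X => dist a b) z x y).trans (tp_comm₂₃ (fun a b : X => dist a b) x z y)
      have E2 : tp (fun a b : X => dist a b) z w y = tp (fun a b : X => dist a b) y z w := (tp_comm₂₃ (fun a b : X => dist a b) z w y).trans (tp_comm₁₂ (fun a b : X => dist a b) z y w)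
      have E3 : tp (fun a b : X => dist a b) x w y = tp (fun a b : X => dist a b) x y w := tp_comm₂₃ (fun a b : X => dist a b) x w y
      linarith [HC, dist_comm w y, E0, E1, E2, E3]
  · -- fpt w z y x
    rcases le_total (dist z w + dist y x) (dist z x + dist y w) with hc | hc
    · refine le_trans (sub_le_sub_right (min_le_left _ _) _) ?_
      have HC := core z y x w hc
      have E0 : tp (fun a b : X => dist a b) z y x = tp (fun a b : X => dist a b) x y z := (tp_comm₂₃ (fun a b : X => dist a b) z y x).trans ((tp_comm₁₂ (fun a b : X => dist a b) z x y).trans (tp_comm₂₃ (fun a b : X => dist a b) x z y))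
      have E1 : tp (fun a b : X => dist a b) z y w = tp (fun a b : X => dist a b) y z w := tp_comm₁₂ (fun a b : X => dist a b) z y w
      have E2 : tp (fun a b : X => dist a b) z x w = tp (fun a b : X => dist a b) x z w := tp_comm₁₂ (fun a b : X => dist a b) z x w
      have E3 : tp (fun a b : X => dist a b) y x w = tp (fun a b : X => dist a b) x y w := tp_comm₁₂ (fun a b : X => dist a b) y x w
      linarith [HC, E0, E1, E2, E3]
    · refine le_trans (sub_le_sub_right (min_le_right _ _) _) ?_
      have HC := core z y w x hc
      have E0 : tp (fun a b : X => dist a b) z y w = tp (fun a b : X => dist a b) y z w := tp_comm₁₂ (fun a b : X => dist a b) z y w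
      have E1 : tp (fun a b : X => dist a b) z y x = tp (fun a b : X => dist a b) x y z := (tp_comm₂₃ (fun a b : X => dist a b) z y x).trans ((tp_comm₁₂ (fun a b : X => dist a b) z x y).trans (tp_comm₂₃ (fun a b : X => dist a b) x z y))
      have E2 : tp (fun a b : X => dist a b) z w x = tp (fun a b : X => dist a b) x z w := (tp_comm₂₃ (fun a b : X => dist a b) z w x).trans (tp_comm₁₂ (fun a b : X => dist a b) z x w)
      have E3 : tp (fun a b : X => dist a b) y w x = tp (fun a b : X => dist a b) x y w := (tp_comm₂₃ (fun a b : X => dist a b) y w x).trans (tp_comm₁₂ (fun a b : X => dist a b) y x w)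
      linarith [HC, dist_comm w x, E0, E1, E2, E3]
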